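/- Let A be a linear map from n×n real matrices into ℝ^m, let r ≤ n, and let P and Q be orthogonal projection matrices onto r-dimensional subspaces of ℝ^n. Suppose that for every Y in the null space of A one has ‖(I−P) Y (I−Q)‖_* ≥ ‖P Y Q‖_*. Then for every matrix Z whose column space equals the range of P and whose row space equals the range of Q, and for every Y in the null space of A, one has ‖Z + Y‖_* ≥ ‖Z‖_*. -/

import Mathlib

open Matrix

/-- The nuclear norm of a real matrix: the sum of its singular values,
i.e. the sum of the square roots of the eigenvalues of `Xᵀ * X`. -/
noncomputable def nuclearNorm {m n : Type*} [Fintype m] [Fintype n] [DecidableEq n]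
    (X : Matrix m n ℝ) : ℝ :=
  ∑ i, Real.sqrt (((by simpa [Matrix.conjTranspose_eq_transpose_of_trivial] using
    Matrix.isHermitian_conjTranspose_mul_self X : (Xᵀ * X).IsHermitian)).eigenvalues i)

namespace NucAux

variable {n : ℕ}

lemma hermT (X : Matrix (Fin n) (Fin n) ℝ) : (Xᵀ * X).IsHermitian := by
  simpa [Matrix.conjTranspose_eq_transpose_of_trivial] using
    Matrix.isHermitian_conjTranspose_mul_self X

lemma dot_nonneg (x : Fin n → ℝ) : 0 ≤ x ⬝ᵥ x :=
  Finset.sum_nonneg fun i _ => mul_self_nonneg _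

lemma mulVec_dot_mulVec (M N : Matrix (Fin n) (Fin n) ℝ) (x y : Fin n → ℝ) :
    (M *ᵥ x) ⬝ᵥ (N *ᵥ y) = x ⬝ᵥ ((Mᵀ * N) *ᵥ y) := by
  conv_rhs => rw [dotProduct_mulVec, ← vecMul_vecMul, vecMul_transpose, ← dotProduct_mulVec]

lemma cs (x y : Fin n → ℝ) : x ⬝ᵥ y ≤ Real.sqrt (x ⬝ᵥ x) * Real.sqrt (y ⬝ᵥ y) := by
  have h := Finset.sum_mul_sq_le_sq_mul_sq Finset.univ x y
  calc x ⬝ᵥ y ≤ |x ⬝ᵥ y| := le_abs_self _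
    _ = Real.sqrt ((x ⬝ᵥ y) ^ 2) := (Real.sqrt_sq_eq_abs _).symm
    _ ≤ Real.sqrt ((x ⬝ᵥ x) * (y ⬝ᵥ y)) := by
        apply Real.sqrt_le_sqrt
        simpa [dotProduct, pow_two] using h
    _ = _ := Real.sqrt_mul (dot_nonneg x) _

/-- Eigenbasis package for `XᵀX`. -/
lemma svd_facts (X : Matrix (Fin n) (Fin n) ℝ) :
    ∃ v : Fin n → Fin n → ℝ,
      (∀ i j, v i ⬝ᵥ v j = if i = j then 1 else 0) ∧
      (∀ w : Fin n → ℝ, ∑ i, (v i ⬝ᵥ w) ^ 2 = w ⬝ᵥ w) ∧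
      (∀ i j, (X *ᵥ v i) ⬝ᵥ (X *ᵥ v j) =
        if i = j then (hermT X).eigenvalues i else 0) ∧
      (∀ M : Matrix (Fin n) (Fin n) ℝ, trace M = ∑ i, v i ⬝ᵥ (M *ᵥ v i)) := by
  set hH := hermT X with hHdef
  set V : Matrix (Fin n) (Fin n) ℝ := (hH.eigenvectorUnitary : Matrix (Fin n) (Fin n) ℝ) with hV
  have hstar : star V = Vᵀ := by
    ext i j; simp [star_apply]
  have h1 : Vᵀ * V = 1 := by
    rw [← hstar]; exact (Unitary.star_mul_self_of_mem hH.eigenvectorUnitary.2)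
  have h2 : V * Vᵀ = 1 := by
    rw [← hstar]; exact (Unitary.mul_star_self_of_mem hH.eigenvectorUnitary.2)
  have horth : ∀ i j, (fun k => V k i) ⬝ᵥ (fun k => V k j) = if i = j then 1 else 0 := by
    intro i j
    have := congrFun (congrFun h1 i) j
    simpa [mul_apply, dotProduct, Matrix.one_apply] using this
  refine ⟨fun i => fun k => V k i, horth, ?_, ?_, ?_⟩
  · intro w
    have key : (Vᵀ *ᵥ w) ⬝ᵥ (Vᵀ *ᵥ w) = w ⬝ᵥ w := by
      rw [mulVec_dot_mulVec, transpose_transpose, h2, one_mulVec]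
    calc ∑ i, ((fun k => V k i) ⬝ᵥ w) ^ 2
        = ∑ i, (Vᵀ *ᵥ w) i * (Vᵀ *ᵥ w) i := by
          apply Finset.sum_congr rfl; intro i _
          simp [mulVec, dotProduct, pow_two]
      _ = w ⬝ᵥ w := key
  · intro i j
    have heig : (Xᵀ * X) *ᵥ (fun k => V k j) = hH.eigenvalues j • (fun k => V k j) := by
      have hcol : (fun k => V k j) =
          (WithLp.equiv 2 _) (hH.eigenvectorBasis j) := by
        funext k; exact hH.eigenvectorUnitary_apply k j
      rw [hcol]; exact hH.mulVec_eigenvectorBasis j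
    have hXH : Xᴴ = Xᵀ := rfl
    rw [mulVec_dot_mulVec, heig, dotProduct_smul]
    rw [smul_eq_mul, horth i j]
    split <;> simp_all
  · intro M
    have : trace M = trace (Vᵀ * M * V) := by
      rw [trace_mul_cycle, h2, one_mul]
    rw [this, trace]
    apply Finset.sum_congr rfl; intro i _
    simp [diag, mul_apply, dotProduct, mulVec, Finset.mul_sum, Finset.sum_mul]
    rw [Finset.sum_comm]
    apply Finset.sum_congr rfl; intro a _
    apply Finset.sum_congr rfl; intro b _
    ring


lemma sum_mulVec' {ι : Type*} (s : Finset ι) (f : ι → Matrix (Fin n) (Fin n) ℝ)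
    (w : Fin n → ℝ) : (∑ i ∈ s, f i) *ᵥ w = ∑ i ∈ s, f i *ᵥ w := by
  ext k
  simp only [mulVec, dotProduct, Matrix.sum_apply, Finset.sum_apply, Finset.sum_mul]
  rw [Finset.sum_comm]

lemma vecMulVec_mulVec' (u x w : Fin n → ℝ) :
    (vecMulVec u x) *ᵥ w = (x ⬝ᵥ w) • u := by
  ext k
  simp only [mulVec, dotProduct, vecMulVec_apply, Pi.smul_apply, smul_eq_mul, Finset.sum_mul]
  apply Finset.sum_congr rfl; intro j _; ring

lemma sum_dotProduct' {ι : Type*} (s : Finset ι) (f : ι → Fin n → ℝ) (y : Fin n → ℝ) :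
    (∑ i ∈ s, f i) ⬝ᵥ y = ∑ i ∈ s, f i ⬝ᵥ y := by
  simp only [dotProduct, Finset.sum_apply, Finset.sum_mul]
  rw [Finset.sum_comm]

lemma dotProduct_sum' {ι : Type*} (s : Finset ι) (y : Fin n → ℝ) (f : ι → Fin n → ℝ) :
    y ⬝ᵥ (∑ i ∈ s, f i) = ∑ i ∈ s, y ⬝ᵥ f i := by
  simp only [dotProduct, Finset.sum_apply, Finset.mul_sum]
  rw [Finset.sum_comm]

lemma trace_le_nuclearNorm (X B : Matrix (Fin n) (Fin n) ℝ)
    (hB : ∀ v : Fin n → ℝ, (B *ᵥ v) ⬝ᵥ (B *ᵥ v) ≤ v ⬝ᵥ v) :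
    trace (Bᵀ * X) ≤ nuclearNorm X := by
  obtain ⟨v, horth, _, heig, htr⟩ := svd_facts X
  rw [htr (Bᵀ * X), nuclearNorm]
  apply Finset.sum_le_sum
  intro i _
  have h1 : v i ⬝ᵥ ((Bᵀ * X) *ᵥ v i) = (B *ᵥ v i) ⬝ᵥ (X *ᵥ v i) :=
    (mulVec_dot_mulVec B X (v i) (v i)).symm
  rw [h1]
  calc (B *ᵥ v i) ⬝ᵥ (X *ᵥ v i)
      ≤ Real.sqrt ((B *ᵥ v i) ⬝ᵥ (B *ᵥ v i)) * Real.sqrt ((X *ᵥ v i) ⬝ᵥ (X *ᵥ v i)) := cs _ _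
    _ ≤ 1 * Real.sqrt ((hermT X).eigenvalues i) := by
        have hb : Real.sqrt ((B *ᵥ v i) ⬝ᵥ (B *ᵥ v i)) ≤ 1 := by
          have : (B *ᵥ v i) ⬝ᵥ (B *ᵥ v i) ≤ 1 := by
            have := hB (v i); rwa [horth i i, if_pos rfl] at this
          calc Real.sqrt ((B *ᵥ v i) ⬝ᵥ (B *ᵥ v i)) ≤ Real.sqrt 1 := Real.sqrt_le_sqrt this
            _ = 1 := Real.sqrt_one
        have hx : Real.sqrt ((X *ᵥ v i) ⬝ᵥ (X *ᵥ v i))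
            = Real.sqrt ((hermT X).eigenvalues i) := by
          rw [heig i i, if_pos rfl]
        rw [hx]
        exact mul_le_mul_of_nonneg_right hb (Real.sqrt_nonneg _)
    _ = _ := one_mul _

lemma exists_dual (X : Matrix (Fin n) (Fin n) ℝ) :
    ∃ B : Matrix (Fin n) (Fin n) ℝ,
      (∀ v : Fin n → ℝ, (B *ᵥ v) ⬝ᵥ (B *ᵥ v) ≤ v ⬝ᵥ v) ∧
      trace (Bᵀ * X) = nuclearNorm X := by
  obtain ⟨v, horth, hpars, heig, htr⟩ := svd_facts X
  set lam := (hermT X).eigenvalues with hlam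
  have hlnn : ∀ i, 0 ≤ lam i := fun i =>
    Matrix.eigenvalues_conjTranspose_mul_self_nonneg X i
  set c : Fin n → ℝ := fun i => if lam i = 0 then 0 else (Real.sqrt (lam i))⁻¹ with hc
  set B : Matrix (Fin n) (Fin n) ℝ :=
    ∑ i, c i • vecMulVec (X *ᵥ v i) (v i) with hBdef
  have hBmul : ∀ w : Fin n → ℝ, B *ᵥ w = ∑ i, (c i * (v i ⬝ᵥ w)) • (X *ᵥ v i) := by
    intro w
    rw [hBdef, sum_mulVec']
    apply Finset.sum_congr rfl; intro i _
    rw [Matrix.smul_mulVec, vecMulVec_mulVec', smul_smul]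
  refine ⟨B, ?_, ?_⟩
  · intro w
    rw [hBmul w]
    rw [dotProduct_sum' Finset.univ]
    have : ∀ j ∈ Finset.univ, ((∑ i, (c i * (v i ⬝ᵥ w)) • (X *ᵥ v i)) ⬝ᵥ
        ((c j * (v j ⬝ᵥ w)) • (X *ᵥ v j)))
        = c j ^ 2 * (v j ⬝ᵥ w) ^ 2 * lam j := by
      intro j _
      rw [sum_dotProduct' Finset.univ]
      rw [Finset.sum_eq_single j]
      · rw [smul_dotProduct, dotProduct_smul, heig j j, if_pos rfl]
        simp [smul_eq_mul]; ring
      · intro i _ hij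
        rw [smul_dotProduct, dotProduct_smul, heig i j, if_neg hij]
        simp
      · simp
    rw [Finset.sum_congr rfl this]
    calc ∑ j, c j ^ 2 * (v j ⬝ᵥ w) ^ 2 * lam j
        ≤ ∑ j, (v j ⬝ᵥ w) ^ 2 := by
          apply Finset.sum_le_sum
          intro j _
          rcases eq_or_ne (lam j) 0 with h0 | h0
          · simp [hc, h0]; positivity
          · have hpos : 0 < lam j := lt_of_le_of_ne (hlnn j) (Ne.symm h0)
            have h1 : c j ^ 2 * lam j = 1 := by
              rw [hc]; simp only [if_neg h0]
              rw [inv_pow, Real.sq_sqrt (hlnn j)]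
              exact inv_mul_cancel₀ h0
            have h2 : c j ^ 2 * (v j ⬝ᵥ w) ^ 2 * lam j = (v j ⬝ᵥ w) ^ 2 := by
              calc c j ^ 2 * (v j ⬝ᵥ w) ^ 2 * lam j
                  = (c j ^ 2 * lam j) * (v j ⬝ᵥ w) ^ 2 := by ring
                _ = (v j ⬝ᵥ w) ^ 2 := by rw [h1, one_mul]
            exact le_of_eq h2
      _ = w ⬝ᵥ w := hpars w
  · rw [htr (Bᵀ * X), nuclearNorm]
    apply Finset.sum_congr rfl
    intro i _
    have h1 : v i ⬝ᵥ ((Bᵀ * X) *ᵥ v i) = (B *ᵥ v i) ⬝ᵥ (X *ᵥ v i) :=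
      (mulVec_dot_mulVec B X (v i) (v i)).symm
    rw [h1, hBmul (v i), sum_dotProduct' Finset.univ]
    rw [Finset.sum_eq_single i]
    · rw [smul_dotProduct, heig i i, if_pos rfl, horth i i, if_pos rfl, mul_one, smul_eq_mul]
      rcases eq_or_ne (lam i) 0 with h0 | h0
      · rw [hc]; simp only [h0]
        rw [show Real.sqrt ((hermT X).eigenvalues i)
            = Real.sqrt (lam i) from rfl, h0, Real.sqrt_zero]
        simp
      · have hpos : 0 < lam i := lt_of_le_of_ne (hlnn i) (Ne.symm h0)
        have hs : Real.sqrt (lam i) ≠ 0 := ne_of_gt (Real.sqrt_pos.mpr hpos)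
        rw [hc]; simp only [if_neg h0]
        rw [inv_mul_eq_div, div_eq_iff hs]
        exact (Real.mul_self_sqrt (hlnn i)).symm
    · intro j _ hji
      rw [smul_dotProduct, heig j i, if_neg hji]
      simp
    · simp


lemma proj_pythag (P : Matrix (Fin n) (Fin n) ℝ) (hs : Pᵀ = P) (hi : P * P = P)
    (v : Fin n → ℝ) :
    (P *ᵥ v) ⬝ᵥ (P *ᵥ v)
      + ((1 - P) *ᵥ v) ⬝ᵥ ((1 - P) *ᵥ v) = v ⬝ᵥ v := by
  have h1 : Pᵀ * P = P := by rw [hs, hi]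
  have h2 : ((1 : Matrix (Fin n) (Fin n) ℝ) - P)ᵀ * (1 - P) = 1 - P := by
    rw [transpose_sub, transpose_one, hs, Matrix.sub_mul, Matrix.mul_sub, Matrix.mul_sub, hi]
    simp
  rw [mulVec_dot_mulVec, mulVec_dot_mulVec, h1, h2, sub_mulVec, one_mulVec, dotProduct_sub]
  ring

lemma proj_contract (P : Matrix (Fin n) (Fin n) ℝ) (hs : Pᵀ = P) (hi : P * P = P)
    (v : Fin n → ℝ) : (P *ᵥ v) ⬝ᵥ (P *ᵥ v) ≤ v ⬝ᵥ v := by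
  have h := proj_pythag P hs hi v
  have h2 := dot_nonneg (((1 : Matrix (Fin n) (Fin n) ℝ) - P) *ᵥ v)
  linarith

lemma proj_orth (P : Matrix (Fin n) (Fin n) ℝ) (hs : Pᵀ = P) (hi : P * P = P)
    (a b : Fin n → ℝ) : (P *ᵥ a) ⬝ᵥ ((1 - P) *ᵥ b) = 0 := by
  rw [mulVec_dot_mulVec]
  have : Pᵀ * ((1 : Matrix (Fin n) (Fin n) ℝ) - P) = 0 := by
    rw [hs, Matrix.mul_sub, mul_one, hi, sub_self]
  rw [this, zero_mulVec, dotProduct_zero]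

lemma mul_left_eq_self_of_range (P Z : Matrix (Fin n) (Fin n) ℝ) (hi : P * P = P)
    (h : LinearMap.range Z.mulVecLin = LinearMap.range P.mulVecLin) : P * Z = Z := by
  have key : ∀ x : Fin n → ℝ, P *ᵥ (Z *ᵥ x) = Z *ᵥ x := by
    intro x
    have hx : Z *ᵥ x ∈ LinearMap.range P.mulVecLin := by
      rw [← h]; exact ⟨x, rfl⟩
    obtain ⟨w, hw⟩ := hx
    have hw' : P *ᵥ w = Z *ᵥ x := hw
    rw [← hw', mulVec_mulVec, hi]
  ext i j
  have := congrFun (key (Pi.single j 1)) i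
  rw [mulVec_mulVec] at this
  simpa [mulVec_single] using this

end NucAux

open NucAux in
/-- If for every `Y` in the null space of `A` we have
`‖(I−P) Y (I−Q)‖_* ≥ ‖P Y Q‖_*`, then for every matrix `Z` whose column space is
the range of `P` and whose row space is the range of `Q`, and every `Y` in the
null space of `A`, `‖Z + Y‖_* ≥ ‖Z‖_*`. -/
theorem stmt5 (n m r : ℕ) (hr : r ≤ n)
    (A : Matrix (Fin n) (Fin n) ℝ →ₗ[ℝ] (Fin m → ℝ))
    (P Q : Matrix (Fin n) (Fin n) ℝ)
    (hPSymm : Pᵀ = P) (hPIdem : P * P = P) (hPrank : P.rank = r)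
    (hQSymm : Qᵀ = Q) (hQIdem : Q * Q = Q) (hQrank : Q.rank = r)
    (hcond : ∀ Y : Matrix (Fin n) (Fin n) ℝ, A Y = 0 →
      nuclearNorm (P * Y * Q) ≤ nuclearNorm ((1 - P) * Y * (1 - Q))) :
    ∀ Z : Matrix (Fin n) (Fin n) ℝ,
      LinearMap.range Z.mulVecLin = LinearMap.range P.mulVecLin →
      LinearMap.range Zᵀ.mulVecLin = LinearMap.range Q.mulVecLin →
      ∀ Y : Matrix (Fin n) (Fin n) ℝ, A Y = 0 →
        nuclearNorm Z ≤ nuclearNorm (Z + Y) := by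

  intro Z hcol hrow Y hY
  -- Z is fixed by the projections
  have hPZ : P * Z = Z := mul_left_eq_self_of_range P Z hPIdem hcol
  have hQZt : Q * Zᵀ = Zᵀ := mul_left_eq_self_of_range Q Zᵀ hQIdem hrow
  have hZQ : Z * Q = Z := by
    have := congrArg Matrix.transpose hQZt
    rwa [transpose_mul, transpose_transpose, hQSymm] at this
  -- dual certificates
  obtain ⟨B₀, hB₀c, hB₀t⟩ := exists_dual Z
  obtain ⟨B₂, hB₂c, hB₂t⟩ := exists_dual ((1 - P) * Y * (1 - Q))
  set B : Matrix (Fin n) (Fin n) ℝ := P * B₀ * Q + (1 - P) * B₂ * (1 - Q) with hB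
  -- B is a contraction
  have hBc : ∀ v : Fin n → ℝ, (B *ᵥ v) ⬝ᵥ (B *ᵥ v) ≤ v ⬝ᵥ v := by
    intro w
    have hsplit : B *ᵥ w = P *ᵥ (B₀ *ᵥ (Q *ᵥ w)) + (1 - P) *ᵥ (B₂ *ᵥ ((1 - Q) *ᵥ w)) := by
      rw [hB, Matrix.add_mulVec]
      simp only [← mulVec_mulVec]
    set a := P *ᵥ (B₀ *ᵥ (Q *ᵥ w))
    set b := (1 - P) *ᵥ (B₂ *ᵥ ((1 - Q) *ᵥ w))
    have hab : a ⬝ᵥ b = 0 := proj_orth P hPSymm hPIdem _ _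
    have hba : b ⬝ᵥ a = 0 := by rw [dotProduct_comm]; exact hab
    have haa : a ⬝ᵥ a ≤ (Q *ᵥ w) ⬝ᵥ (Q *ᵥ w) :=
      le_trans (proj_contract P hPSymm hPIdem _) (hB₀c _)
    have hbb : b ⬝ᵥ b ≤ ((1 - Q) *ᵥ w) ⬝ᵥ ((1 - Q) *ᵥ w) :=
      le_trans (proj_contract (1 - P) (by rw [transpose_sub, transpose_one, hPSymm])
        (by rw [Matrix.sub_mul, Matrix.mul_sub, Matrix.mul_sub, hPIdem]; simp) _)
        (hB₂c _)
    have hq := proj_pythag Q hQSymm hQIdem w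
    rw [hsplit, dotProduct_add, add_dotProduct, add_dotProduct, hab, hba]
    linarith
  -- compute the trace of Bᵀ * (Z + Y)
  have hBt : Bᵀ = Q * B₀ᵀ * P + (1 - Q) * B₂ᵀ * (1 - P) := by
    simp only [hB, transpose_add, transpose_mul, transpose_sub, transpose_one,
      hPSymm, hQSymm, mul_assoc]
  have h1PZ : (1 - P) * Z = 0 := by
    rw [Matrix.sub_mul, one_mul, hPZ, sub_self]
  have t1 : trace (Q * B₀ᵀ * P * Z) = nuclearNorm Z := by
    rw [mul_assoc (Q * B₀ᵀ) P Z, hPZ, trace_mul_cycle Q B₀ᵀ Z, hZQ, trace_mul_comm Z B₀ᵀ]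
    exact hB₀t
  have t3 : trace ((1 - Q) * B₂ᵀ * (1 - P) * Z) = 0 := by
    rw [mul_assoc, h1PZ, mul_zero, trace_zero]
  have t2 : trace (Q * B₀ᵀ * P * Y) = trace (B₀ᵀ * (P * Y * Q)) := by
    rw [mul_assoc (Q * B₀ᵀ) P Y, trace_mul_cycle Q B₀ᵀ (P * Y), trace_mul_comm (P * Y * Q) B₀ᵀ]
  have t4 : trace ((1 - Q) * B₂ᵀ * (1 - P) * Y) = trace (B₂ᵀ * ((1 - P) * Y * (1 - Q))) := by
    rw [mul_assoc ((1 - Q) * B₂ᵀ) (1 - P) Y, trace_mul_cycle (1 - Q) B₂ᵀ ((1 - P) * Y),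
      trace_mul_comm ((1 - P) * Y * (1 - Q)) B₂ᵀ]
  have ht2bound : -(nuclearNorm (P * Y * Q)) ≤ trace (B₀ᵀ * (P * Y * Q)) := by
    have hneg : ∀ v : Fin n → ℝ, ((-B₀) *ᵥ v) ⬝ᵥ ((-B₀) *ᵥ v) ≤ v ⬝ᵥ v := by
      intro v; rw [Matrix.neg_mulVec]; simpa [dotProduct_neg, neg_dotProduct] using hB₀c v
    have := trace_le_nuclearNorm (P * Y * Q) (-B₀) hneg
    rw [transpose_neg, Matrix.neg_mul, trace_neg] at this
    linarith
  have hexp : trace (Bᵀ * (Z + Y)) =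
      trace (Q * B₀ᵀ * P * Z) + trace (Q * B₀ᵀ * P * Y)
        + trace ((1 - Q) * B₂ᵀ * (1 - P) * Z) + trace ((1 - Q) * B₂ᵀ * (1 - P) * Y) := by
    rw [hBt, Matrix.add_mul, Matrix.mul_add, Matrix.mul_add, trace_add, trace_add, trace_add]
    ring
  have hfinal := trace_le_nuclearNorm (Z + Y) B hBc
  have hc := hcond Y hY
  rw [hexp, t1, t2, t3, t4, hB₂t] at hfinal
  linarith
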